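/- For an integer i ≥ 0, consider the space of Sp-invariant linear functionals on the i-th exterior power ⋀^i V, i.e., ℂ-linear maps φ : ⋀^i V → ℂ satisfying φ((⋀^i g)(x)) = φ(x) for all x ∈ ⋀^i V and all g ∈ Sp. If i is odd, this space is zero; if i is even, this space is one-dimensional. -/

import Mathlib

/-!
Setup: `V` is the complex vector space with basis `{e_i, f_i}_{i ∈ ℕ}`, realized
as finitely supported functions on `ℕ ⊕ ℕ`.  `ω` is the symplectic form, and
`IsSp g` says that `g` belongs to the infinite symplectic group `Sp`.
`⋀[ℂ]^i V` is the `i`-th exterior power of `V` (a submodule of the exterior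
algebra), and `g` acts on it via the induced algebra map `ExteriorAlgebra.map g`
(which carries `⋀^i V` into itself); a functional `φ` on `⋀^i V` is invariant
(`SpInvariantFunctional i φ`) if `φ((⋀^i g)(x)) = φ(x)` for all `x` and all `g ∈ Sp`.
The claim: this space of invariant functionals is zero if `i` is odd and
one-dimensional if `i` is even.
-/

noncomputable section

/-- The complex vector space with basis `{e_i, f_i}_{i ∈ ℕ}`. -/
abbrev V : Type := (ℕ ⊕ ℕ) →₀ ℂ

/-- The basis vector `e_i`. -/
def e (i : ℕ) : V := Finsupp.single (Sum.inl i) 1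

/-- The basis vector `f_i`. -/
def f (i : ℕ) : V := Finsupp.single (Sum.inr i) 1

/-- The symplectic form `ω : ω(e_i, f_j) = δ_{ij}`, `ω(e_i,e_j) = ω(f_i,f_j) = 0`. -/
def omegaForm (v w : V) : ℂ :=
  ∑ᶠ i : ℕ, (v (Sum.inl i) * w (Sum.inr i) - v (Sum.inr i) * w (Sum.inl i))

/-- Membership in the infinite symplectic group `Sp`. -/
def IsSp (g : V ≃ₗ[ℂ] V) : Prop :=
  (∀ v w : V, omegaForm (g v) (g w) = omegaForm v w) ∧
    {i : ℕ | g (e i) ≠ e i ∨ g (f i) ≠ f i}.Finite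

/-- `φ` is an `Sp`-invariant linear functional on `⋀^i V`: whenever `g ∈ Sp`
carries `x ∈ ⋀^i V` to `y ∈ ⋀^i V` (inside the exterior algebra), `φ y = φ x`. -/
def SpInvariantFunctional (i : ℕ) (φ : ⋀[ℂ]^i V →ₗ[ℂ] ℂ) : Prop :=
  ∀ g : V ≃ₗ[ℂ] V, IsSp g → ∀ x y : ⋀[ℂ]^i V,
    ExteriorAlgebra.map (g : V →ₗ[ℂ] V) (x : ExteriorAlgebra ℂ V) =
      (y : ExteriorAlgebra ℂ V) → φ y = φ x

/-! ### basics on `omegaForm` -/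

/-- The basis vector indexed by `x : ℕ ⊕ ℕ`. -/
def bas (x : ℕ ⊕ ℕ) : V := Finsupp.single x 1

lemma bas_injective : Function.Injective bas :=
  Finsupp.single_left_injective one_ne_zero

/-- The summand appearing in `omegaForm`. -/
def osummand (v w : V) (i : ℕ) : ℂ :=
  v (Sum.inl i) * w (Sum.inr i) - v (Sum.inr i) * w (Sum.inl i)

lemma omegaForm_def (v w : V) : omegaForm v w = ∑ᶠ i : ℕ, osummand v w i := rfl

lemma osupp (v w : V) : (Function.support (osummand v w)).Finite := by
  have : Function.support (osummand v w) ⊆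
      ↑(v.support.preimage Sum.inl Sum.inl_injective.injOn ∪
        v.support.preimage Sum.inr Sum.inr_injective.injOn ∪
        (w.support.preimage Sum.inl Sum.inl_injective.injOn ∪
         w.support.preimage Sum.inr Sum.inr_injective.injOn)) := by
    intro i hi
    rw [Function.mem_support, osummand] at hi
    have h : v (Sum.inl i) ≠ 0 ∨ v (Sum.inr i) ≠ 0 ∨ w (Sum.inl i) ≠ 0 ∨ w (Sum.inr i) ≠ 0 := by
      by_contra h
      push_neg at h
      obtain ⟨h1, h2, h3, h4⟩ := h
      rw [h1, h2, h3] at hi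
      simp at hi
    simp only [Finset.coe_union, Set.mem_union, Finset.coe_preimage, Set.mem_preimage,
      Finset.mem_coe, Finsupp.mem_support_iff]
    tauto
  exact Set.Finite.subset (Finset.finite_toSet _) this

lemma omegaForm_add_left (v v' w : V) :
    omegaForm (v + v') w = omegaForm v w + omegaForm v' w := by
  rw [omegaForm_def, omegaForm_def, omegaForm_def, ← finsum_add_distrib (osupp v w) (osupp v' w)]
  exact finsum_congr fun i => by simp [osummand]; ring

lemma omegaForm_add_right (v w w' : V) :
    omegaForm v (w + w') = omegaForm v w + omegaForm v w' := by
  rw [omegaForm_def, omegaForm_def, omegaForm_def, ← finsum_add_distrib (osupp v w) (osupp v w')]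
  exact finsum_congr fun i => by simp [osummand]; ring

lemma omegaForm_smul_left (c : ℂ) (v w : V) :
    omegaForm (c • v) w = c * omegaForm v w := by
  rw [omegaForm_def, omegaForm_def, mul_finsum _ c]
  exact finsum_congr fun i => by simp [osummand]; ring

lemma omegaForm_smul_right (c : ℂ) (v w : V) :
    omegaForm v (c • w) = c * omegaForm v w := by
  rw [omegaForm_def, omegaForm_def, mul_finsum _ c]
  exact finsum_congr fun i => by simp [osummand]; ring

lemma bas_apply (x y : ℕ ⊕ ℕ) : (bas x : V) y = if x = y then 1 else 0 :=
  Finsupp.single_apply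

lemma omega_bas_ll (a b : ℕ) : omegaForm (bas (Sum.inl a)) (bas (Sum.inl b)) = 0 := by
  rw [omegaForm_def]
  apply finsum_eq_zero_of_forall_eq_zero
  intro i
  simp [osummand, bas_apply]

lemma omega_bas_rr (a b : ℕ) : omegaForm (bas (Sum.inr a)) (bas (Sum.inr b)) = 0 := by
  rw [omegaForm_def]
  apply finsum_eq_zero_of_forall_eq_zero
  intro i
  simp [osummand, bas_apply]

lemma omega_bas_lr (a b : ℕ) :
    omegaForm (bas (Sum.inl a)) (bas (Sum.inr b)) = if a = b then 1 else 0 := by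
  rw [omegaForm_def]
  by_cases hab : a = b
  · subst hab
    rw [finsum_eq_single _ a (fun x hx => by simp [osummand, bas_apply, (Ne.symm hx)])]
    simp [osummand, bas_apply]
  · rw [if_neg hab]
    apply finsum_eq_zero_of_forall_eq_zero
    intro i
    simp only [osummand, bas_apply]
    by_cases ha : a = i <;> by_cases hb : b = i <;> simp [ha, hb] <;> omega

lemma omega_bas_rl (a b : ℕ) :
    omegaForm (bas (Sum.inr a)) (bas (Sum.inl b)) = if a = b then -1 else 0 := by
  rw [omegaForm_def]
  by_cases hab : a = b
  · subst hab
    rw [finsum_eq_single _ a (fun x hx => by simp [osummand, bas_apply, (Ne.symm hx)])]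
    simp [osummand, bas_apply]
  · rw [if_neg hab]
    apply finsum_eq_zero_of_forall_eq_zero
    intro i
    simp only [osummand, bas_apply]
    by_cases ha : a = i <;> by_cases hb : b = i <;> simp [ha, hb] <;> omega

/-! ### diagonal scaling element of Sp -/

/-- Multiplication of coordinates by a function `d`. -/
def Tmul (d : ℕ ⊕ ℕ → ℂ) : V →ₗ[ℂ] V :=
  Finsupp.lsum ℂ (fun x => d x • Finsupp.lsingle x)

lemma Tmul_single (d : ℕ ⊕ ℕ → ℂ) (x : ℕ ⊕ ℕ) (c : ℂ) :
    Tmul d (Finsupp.single x c) = Finsupp.single x (d x * c) := by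
  rw [Tmul, Finsupp.lsum_single]
  simp [Finsupp.smul_single, smul_eq_mul, mul_comm]

/-- The scaling factors: `e j ↦ 2 • e j`, `f j ↦ (1/2) • f j`. -/
def dscale (j : ℕ) : ℕ ⊕ ℕ → ℂ :=
  Sum.elim (fun m => if m = j then 2 else 1) (fun m => if m = j then 2⁻¹ else 1)

def dscale' (j : ℕ) : ℕ ⊕ ℕ → ℂ :=
  Sum.elim (fun m => if m = j then 2⁻¹ else 1) (fun m => if m = j then 2 else 1)

lemma dscale_mul_dscale' (j : ℕ) (x : ℕ ⊕ ℕ) : dscale j x * dscale' j x = 1 := by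
  rcases x with m | m <;> by_cases h : m = j <;> simp [dscale, dscale', h] <;> norm_num

lemma dscale_mul (j i : ℕ) : dscale j (Sum.inl i) * dscale j (Sum.inr i) = 1 := by
  by_cases h : i = j <;> simp [dscale, h] <;> norm_num

/-- The scaling element of `Sp`. -/
def gscale (j : ℕ) : V ≃ₗ[ℂ] V := by
  refine LinearEquiv.ofLinear (Tmul (dscale j)) (Tmul (dscale' j)) ?_ ?_
  · apply Finsupp.lhom_ext
    intro x c
    simp only [LinearMap.comp_apply, Tmul_single, LinearMap.id_apply]
    rw [← mul_assoc, dscale_mul_dscale', one_mul]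
  · apply Finsupp.lhom_ext
    intro x c
    simp only [LinearMap.comp_apply, Tmul_single, LinearMap.id_apply]
    rw [← mul_assoc, mul_comm (dscale' j x), dscale_mul_dscale', one_mul]

lemma gscale_apply (j : ℕ) (v : V) (y : ℕ ⊕ ℕ) : gscale j v y = dscale j y * v y := by
  have : gscale j v = Tmul (dscale j) v := rfl
  rw [this, Tmul, Finsupp.lsum_apply, Finsupp.sum_apply]
  rw [Finsupp.sum]
  have : ∀ x ∈ v.support, (dscale j x • Finsupp.lsingle x (R := ℂ)) (v x) y
      = if x = y then dscale j x * v x else 0 := by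
    intro x _
    by_cases hxy : x = y
    · subst hxy
      simp [Finsupp.single_apply]
    · simp [Finsupp.single_apply, hxy]
  rw [Finset.sum_congr rfl this, Finset.sum_ite_eq' v.support y (fun x => dscale j x * v x)]
  by_cases hy : y ∈ v.support
  · rw [if_pos hy]
  · rw [if_neg hy]
    rw [Finsupp.notMem_support_iff.mp hy, mul_zero]

lemma gscale_bas (j : ℕ) (x : ℕ ⊕ ℕ) : gscale j (bas x) = dscale j x • bas x := by
  have : gscale j (bas x) = Tmul (dscale j) (bas x) := rfl
  rw [this, bas, Tmul_single, Finsupp.smul_single, smul_eq_mul, mul_one]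

lemma isSp_gscale (j : ℕ) : IsSp (gscale j) := by
  constructor
  · intro v w
    rw [omegaForm_def, omegaForm_def]
    apply finsum_congr
    intro i
    simp only [osummand, gscale_apply]
    have h := dscale_mul j i
    calc dscale j (Sum.inl i) * v (Sum.inl i) * (dscale j (Sum.inr i) * w (Sum.inr i)) -
          dscale j (Sum.inr i) * v (Sum.inr i) * (dscale j (Sum.inl i) * w (Sum.inl i))
        = (dscale j (Sum.inl i) * dscale j (Sum.inr i)) *
            (v (Sum.inl i) * w (Sum.inr i) - v (Sum.inr i) * w (Sum.inl i)) := by ring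
      _ = v (Sum.inl i) * w (Sum.inr i) - v (Sum.inr i) * w (Sum.inl i) := by
          rw [h, one_mul]
  · apply Set.Finite.subset (Set.finite_singleton j)
    intro i hi
    simp only [Set.mem_setOf_eq] at hi
    simp only [Set.mem_singleton_iff]
    by_contra hij
    have he : gscale j (e i) = e i := by
      have : (e i : V) = bas (Sum.inl i) := rfl
      rw [this, gscale_bas]
      simp [dscale, hij]
    have hf : gscale j (f i) = f i := by
      have : (f i : V) = bas (Sum.inr i) := rfl
      rw [this, gscale_bas]
      simp [dscale, hij]
    tauto

/-! ### permutation elements of Sp -/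

/-- The element of `Sp` induced by a permutation of `ℕ` (acting the same way on the
`e` and `f` indices). -/
def gperm (π : Equiv.Perm ℕ) : V ≃ₗ[ℂ] V :=
  Finsupp.domLCongr (Equiv.sumCongr π π)

lemma gperm_bas (π : Equiv.Perm ℕ) (x : ℕ ⊕ ℕ) :
    gperm π (bas x) = bas (Equiv.sumCongr π π x) := by
  rw [gperm, bas, bas, Finsupp.domLCongr_single]

lemma gperm_apply (π : Equiv.Perm ℕ) (v : V) (y : ℕ ⊕ ℕ) :
    gperm π v y = v ((Equiv.sumCongr π π).symm y) := by
  rw [gperm, Finsupp.domLCongr_apply]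
  simp [Finsupp.domCongr_apply, Finsupp.equivMapDomain_apply]

lemma isSp_gperm (π : Equiv.Perm ℕ) (hπ : {x : ℕ | π x ≠ x}.Finite) : IsSp (gperm π) := by
  constructor
  · intro v w
    rw [omegaForm_def, omegaForm_def]
    have h1 : ∀ i : ℕ, osummand (gperm π v) (gperm π w) i = osummand v w (π.symm i) := by
      intro i
      simp [osummand, gperm_apply, Equiv.sumCongr_symm, Equiv.sumCongr_apply]
    rw [finsum_congr h1]
    exact finsum_comp_equiv (π.symm : ℕ ≃ ℕ)
  · apply Set.Finite.subset hπ
    intro i hi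
    simp only [Set.mem_setOf_eq] at hi ⊢
    intro hfix
    have he : gperm π (e i) = e i := by
      have : (e i : V) = bas (Sum.inl i) := rfl
      rw [this, gperm_bas]
      simp [hfix]
    have hf : gperm π (f i) = f i := by
      have : (f i : V) = bas (Sum.inr i) := rfl
      rw [this, gperm_bas]
      simp [hfix]
    tauto

/-! ### wedges of vectors in the exterior power -/

open ExteriorAlgebra in
/-- The wedge of a tuple of vectors, as an element of the `n`-th exterior power. -/
def wV (n : ℕ) (v : Fin n → V) : ⋀[ℂ]^n V :=
  ⟨ExteriorAlgebra.ιMulti ℂ n v, ExteriorAlgebra.ιMulti_range ℂ n (Set.mem_range_self v)⟩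

/-- The wedge of a tuple of basis vectors. -/
def wB (n : ℕ) (a : Fin n → ℕ ⊕ ℕ) : ⋀[ℂ]^n V := wV n (fun m => bas (a m))

lemma wV_coe (n : ℕ) (v : Fin n → V) :
    (wV n v : ExteriorAlgebra ℂ V) = ExteriorAlgebra.ιMulti ℂ n v := rfl

/-- A linear functional on the exterior power vanishing on all wedges of basis
vectors is zero. -/
lemma ext_zero_of_basis (n : ℕ) (φ : ⋀[ℂ]^n V →ₗ[ℂ] ℂ)
    (h : ∀ a : Fin n → ℕ ⊕ ℕ, φ (wB n a) = 0) : φ = 0 := by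
  have hle : Submodule.span ℂ (Set.range (ExteriorAlgebra.ιMulti ℂ n (M := V))) ≤ ⋀[ℂ]^n V := by
    rw [ExteriorAlgebra.ιMulti_span_fixedDegree]
  refine LinearMap.ext fun x => ?_
  obtain ⟨x, hx⟩ := x
  have hx' : x ∈ Submodule.span ℂ (Set.range (ExteriorAlgebra.ιMulti ℂ n (M := V))) := by
    rw [ExteriorAlgebra.ιMulti_span_fixedDegree]; exact hx
  simp only [LinearMap.zero_apply]
  revert hx
  refine Submodule.span_induction
    (p := fun y _ => ∀ hy : y ∈ ⋀[ℂ]^n V, φ ⟨y, hy⟩ = 0) ?_ ?_ ?_ ?_ hx'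
  · rintro _ ⟨v, rfl⟩ hy
    -- expand each vector in the basis
    have hexp : ExteriorAlgebra.ιMulti ℂ n v =
        ∑ r ∈ Fintype.piFinset (fun m : Fin n => (v m).support),
          (∏ m, v m (r m)) • ExteriorAlgebra.ιMulti ℂ n (fun m => bas (r m)) := by
      have h1 : v = fun m => ∑ x ∈ (v m).support, v m x • bas x := by
        funext m
        conv_lhs => rw [← Finsupp.sum_single (v m)]
        rw [Finsupp.sum]
        exact Finset.sum_congr rfl fun x _ => by
          rw [bas, Finsupp.smul_single, smul_eq_mul, mul_one]
      conv_lhs => rw [h1]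
      have hms := (ExteriorAlgebra.ιMulti ℂ n (M := V)).toMultilinearMap.map_sum_finset
        (fun m x => v m x • bas x) (fun m => (v m).support)
      simp only [AlternatingMap.coe_multilinearMap] at hms
      rw [hms]
      refine Finset.sum_congr rfl fun r _ => ?_
      have hsu := (ExteriorAlgebra.ιMulti ℂ n (M := V)).toMultilinearMap.map_smul_univ
        (fun m => v m (r m)) (fun m => bas (r m))
      simp only [AlternatingMap.coe_multilinearMap] at hsu
      exact hsu
    have hmem : ∀ r : Fin n → ℕ ⊕ ℕ,
        ExteriorAlgebra.ιMulti ℂ n (fun m => bas (r m)) ∈ ⋀[ℂ]^n V :=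
      fun r => ExteriorAlgebra.ιMulti_range ℂ n (Set.mem_range_self _)
    have : (⟨ExteriorAlgebra.ιMulti ℂ n v, hy⟩ : ⋀[ℂ]^n V) =
        ∑ r ∈ Fintype.piFinset (fun m : Fin n => (v m).support),
          (∏ m, v m (r m)) • wB n r := by
      apply Subtype.ext
      push_cast [wB, wV]
      exact hexp
    rw [this, map_sum]
    refine Finset.sum_eq_zero fun r _ => ?_
    rw [map_smul, h r, smul_zero]
  · intro hy
    have : (⟨0, hy⟩ : ⋀[ℂ]^n V) = 0 := rfl
    rw [this, map_zero]
  · intro y z hy hz hy' hz' hmem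
    have : (⟨y + z, hmem⟩ : ⋀[ℂ]^n V) = ⟨y, hle hy⟩ + ⟨z, hle hz⟩ := rfl
    rw [this, map_add, hy' (hle hy), hz' (hle hz), add_zero]
  · intro c y hy hy' hmem
    have : (⟨c • y, hmem⟩ : ⋀[ℂ]^n V) = c • ⟨y, hle hy⟩ := rfl
    rw [this, map_smul, hy' (hle hy), smul_zero]

/-- Invariance applied to a wedge of vectors. -/
lemma phi_inv_apply {n : ℕ} {φ : ⋀[ℂ]^n V →ₗ[ℂ] ℂ} (hφ : SpInvariantFunctional n φ)
    {g : V ≃ₗ[ℂ] V} (hg : IsSp g) (v : Fin n → V) :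
    φ (wV n (fun m => g (v m))) = φ (wV n v) := by
  refine hφ g hg (wV n v) (wV n (fun m => g (v m))) ?_
  rw [wV_coe, wV_coe, ExteriorAlgebra.map_apply_ιMulti]
  rfl

/-- Invariance under a scaling: `φ` of a basis wedge gets multiplied by the product of
the scaling factors. -/
lemma phi_scale {n : ℕ} {φ : ⋀[ℂ]^n V →ₗ[ℂ] ℂ} (hφ : SpInvariantFunctional n φ)
    (a : Fin n → ℕ ⊕ ℕ) (j : ℕ) :
    φ (wB n a) = (∏ m, dscale j (a m)) * φ (wB n a) := by
  have h1 : ∀ m : Fin n, gscale j (bas (a m)) = dscale j (a m) • bas (a m) :=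
    fun m => gscale_bas j (a m)
  have h2 : φ (wV n (fun m => gscale j (bas (a m)))) = φ (wB n a) :=
    phi_inv_apply hφ (isSp_gscale j) _
  have h3 : wV n (fun m => gscale j (bas (a m))) = (∏ m, dscale j (a m)) • wB n a := by
    apply Subtype.ext
    push_cast [wB, wV]
    have : (fun m => gscale j (bas (a m))) = fun m => dscale j (a m) • bas (a m) := by
      funext m; exact h1 m
    rw [this]
    have hsu := (ExteriorAlgebra.ιMulti ℂ n (M := V)).toMultilinearMap.map_smul_univ
      (fun m => dscale j (a m)) (fun m => bas (a m))
    simp only [AlternatingMap.coe_multilinearMap] at hsu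
    exact hsu
  rw [h3, map_smul, smul_eq_mul] at h2
  exact h2.symm

/-! ### the Pfaffian-type invariant alternating map -/

open Equiv in
/-- Identification of `Fin k × Bool` with `Fin (k + k)`. -/
def EE (k : ℕ) : Fin k × Bool ≃ Fin (k + k) :=
  (Equiv.prodComm (Fin k) Bool).trans ((Equiv.boolProdEquivSum (Fin k)).trans finSumFinEquiv)

/-- The product of `ω`-values along the pairs determined by a permutation. -/
def pprod (k : ℕ) (σ : Equiv.Perm (Fin k × Bool)) (v : Fin (k + k) → V) : ℂ :=
  ∏ m : Fin k, omegaForm (v (EE k (σ (m, false)))) (v (EE k (σ (m, true))))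

/-- The full antisymmetrized sum (a variant of the Pfaffian of the Gram matrix). -/
def psum (k : ℕ) (v : Fin (k + k) → V) : ℂ :=
  ∑ σ : Equiv.Perm (Fin k × Bool), ((Equiv.Perm.sign σ : ℤ) : ℂ) * pprod k σ v

lemma pprod_update (k : ℕ) (σ : Equiv.Perm (Fin k × Bool)) (v : Fin (k + k) → V)
    (p : Fin (k + k)) :
    ∃ h : V → ℂ, (∀ z z', h (z + z') = h z + h z') ∧ (∀ (c : ℂ) z, h (c • z) = c * h z) ∧
      ∀ z, pprod k σ (Function.update v p z) = h z := by
  set q := σ.symm ((EE k).symm p) with hqdef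
  have key : ∀ x : Fin k × Bool, EE k (σ x) = p ↔ x = q := by
    intro x
    rw [hqdef, ← Equiv.apply_eq_iff_eq_symm_apply, ← Equiv.apply_eq_iff_eq_symm_apply]
  have hupd : ∀ (z : V) (x : Fin k × Bool), x ≠ q →
      Function.update v p z (EE k (σ x)) = v (EE k (σ x)) := by
    intro z x hx
    apply Function.update_of_ne
    intro hcon
    exact hx ((key x).mp hcon)
  have hfst : ∀ (m : Fin k) (b : Bool), m ≠ q.1 → (m, b) ≠ q := by
    intro m b hm hcon
    exact hm (by rw [← hcon])
  rcases hbq : q.2 with _ | _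
  · -- q.2 = false : the updated slot is the left argument of factor q.1
    have hq1 : (q.1, false) = q := by rw [← hbq]
    refine ⟨fun z => omegaForm z (v (EE k (σ (q.1, true)))) *
      ∏ m ∈ Finset.univ.erase q.1,
        omegaForm (v (EE k (σ (m, false)))) (v (EE k (σ (m, true)))), ?_, ?_, ?_⟩
    · intro z z'; dsimp only; rw [omegaForm_add_left, add_mul]
    · intro c z; dsimp only; rw [omegaForm_smul_left, mul_assoc]
    · intro z
      rw [pprod, ← Finset.mul_prod_erase Finset.univ _ (Finset.mem_univ q.1)]
      congr 1
      · congr 1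
        · rw [hq1, hqdef]
          rw [Equiv.apply_symm_apply, Equiv.apply_symm_apply]
          exact Function.update_self p z v
        · apply hupd
          intro hcon
          rw [← hq1] at hcon
          exact Bool.false_ne_true (congrArg Prod.snd hcon).symm
      · refine Finset.prod_congr rfl fun m hm => ?_
        have hm1 : m ≠ q.1 := (Finset.mem_erase.mp hm).1
        rw [hupd z _ (hfst m false hm1), hupd z _ (hfst m true hm1)]
  · -- q.2 = true
    have hq1 : (q.1, true) = q := by rw [← hbq]
    refine ⟨fun z => omegaForm (v (EE k (σ (q.1, false)))) z *
      ∏ m ∈ Finset.univ.erase q.1,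
        omegaForm (v (EE k (σ (m, false)))) (v (EE k (σ (m, true)))), ?_, ?_, ?_⟩
    · intro z z'; dsimp only; rw [omegaForm_add_right, add_mul]
    · intro c z; dsimp only; rw [omegaForm_smul_right, mul_assoc]
    · intro z
      rw [pprod, ← Finset.mul_prod_erase Finset.univ _ (Finset.mem_univ q.1)]
      congr 1
      · congr 1
        · apply hupd
          intro hcon
          rw [← hq1] at hcon
          exact Bool.false_ne_true (congrArg Prod.snd hcon)
        · rw [hq1, hqdef]
          rw [Equiv.apply_symm_apply, Equiv.apply_symm_apply]
          exact Function.update_self p z v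
      · refine Finset.prod_congr rfl fun m hm => ?_
        have hm1 : m ≠ q.1 := (Finset.mem_erase.mp hm).1
        rw [hupd z _ (hfst m false hm1), hupd z _ (hfst m true hm1)]

/-- `psum` as a multilinear map. -/
def Fmul (k : ℕ) : MultilinearMap ℂ (fun _ : Fin (k + k) => V) ℂ where
  toFun := psum k
  map_update_add' := by
    intro inst v p x y
    obtain rfl : inst = instDecidableEqFin (k + k) := Subsingleton.elim _ _
    simp only [psum, ← Finset.sum_add_distrib]
    refine Finset.sum_congr rfl fun σ _ => ?_
    obtain ⟨h, hadd, _, hval⟩ := pprod_update k σ v p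
    rw [hval, hval, hval, hadd, mul_add]
  map_update_smul' := by
    intro inst v p c x
    obtain rfl : inst = instDecidableEqFin (k + k) := Subsingleton.elim _ _
    simp only [psum, smul_eq_mul, Finset.mul_sum]
    refine Finset.sum_congr rfl fun σ _ => ?_
    obtain ⟨h, _, hsmul, hval⟩ := pprod_update k σ v p
    rw [hval, hval, hsmul]
    ring

/-- `psum` as an alternating map. -/
def Fpf (k : ℕ) : V [⋀^Fin (k + k)]→ₗ[ℂ] ℂ where
  toMultilinearMap := Fmul k
  map_eq_zero_of_eq' := by
    intro v p q hpq hne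
    have hvswap : ∀ x, v (Equiv.swap p q x) = v x := by
      intro x
      rcases Equiv.swap_apply_def p q x with _
      by_cases hxp : x = p
      · subst hxp; rw [Equiv.swap_apply_left, ← hpq]
      · by_cases hxq : x = q
        · subst hxq; rw [Equiv.swap_apply_right, hpq]
        · rw [Equiv.swap_apply_of_ne_of_ne hxp hxq]
    set c : Equiv.Perm (Fin k × Bool) := (EE k).symm.permCongr (Equiv.swap p q) with hc
    have hterm : ∀ σ : Equiv.Perm (Fin k × Bool),
        ((Equiv.Perm.sign (c * σ) : ℤ) : ℂ) * pprod k (c * σ) v =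
          -(((Equiv.Perm.sign σ : ℤ) : ℂ) * pprod k σ v) := by
      intro σ
      have hsign : Equiv.Perm.sign (c * σ) = -Equiv.Perm.sign σ := by
        rw [map_mul, hc, Equiv.Perm.sign_permCongr, Equiv.Perm.sign_swap hne, neg_mul, one_mul]
      have hpp : pprod k (c * σ) v = pprod k σ v := by
        rw [pprod, pprod]
        refine Finset.prod_congr rfl fun m _ => ?_
        have hx : ∀ x : Fin k × Bool, v (EE k ((c * σ) x)) = v (EE k (σ x)) := by
          intro x
          rw [Equiv.Perm.mul_apply, hc]
          simp only [Equiv.permCongr_apply, Equiv.symm_symm]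
          rw [Equiv.apply_symm_apply]
          exact hvswap _
        rw [hx (m, false), hx (m, true)]
      rw [hsign, hpp]
      push_cast
      ring
    have hσsum : psum k v = ∑ σ : Equiv.Perm (Fin k × Bool),
        ((Equiv.Perm.sign (c * σ) : ℤ) : ℂ) * pprod k (c * σ) v := by
      simp only [psum]
      exact Fintype.sum_equiv (Equiv.mulLeft c) _ _ (fun σ => rfl) |>.symm
    have h2 : psum k v = -psum k v := by
      conv_lhs => rw [hσsum]
      conv_rhs => rw [psum]
      rw [← Finset.sum_neg_distrib]
      exact Finset.sum_congr rfl fun σ _ => hterm σ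
    have : (2 : ℂ) * psum k v = 0 := by linear_combination h2
    have h2ne : (2 : ℂ) ≠ 0 := two_ne_zero
    exact (mul_eq_zero.mp this).resolve_left h2ne

lemma Fpf_apply (k : ℕ) (v : Fin (k + k) → V) : Fpf k v = psum k v := rfl

/-- `Fpf` is invariant under any `ω`-preserving map. -/
lemma Fpf_comp (k : ℕ) (g : V →ₗ[ℂ] V)
    (hg : ∀ v w : V, omegaForm (g v) (g w) = omegaForm v w) (v : Fin (k + k) → V) :
    Fpf k (fun x => g (v x)) = Fpf k v := by
  rw [Fpf_apply, Fpf_apply, psum, psum]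
  refine Finset.sum_congr rfl fun σ _ => ?_
  congr 1
  rw [pprod, pprod]
  exact Finset.prod_congr rfl fun m _ => hg _ _

/-! ### evaluation of `Fpf` on standard symplectic tuples -/

/-- The tuple of indices `e_{u 0}, f_{u 0}, e_{u 1}, f_{u 1}, …` (up to the fixed
identification `EE`). -/
def idxT {k : ℕ} (u : Fin k → ℕ) : Fin k × Bool → ℕ ⊕ ℕ :=
  fun y => cond y.2 (Sum.inr (u y.1)) (Sum.inl (u y.1))

def tTup (k : ℕ) (u : Fin k → ℕ) : Fin (k + k) → ℕ ⊕ ℕ :=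
  fun x => idxT u ((EE k).symm x)

lemma omega_idx {k : ℕ} (u : Fin k → ℕ) (hu : Function.Injective u) (x y : Fin k × Bool) :
    omegaForm (bas (idxT u x)) (bas (idxT u y)) =
      if y = (x.1, !x.2) then (cond x.2 (-1) 1 : ℂ) else 0 := by
  obtain ⟨a, bx⟩ := x
  obtain ⟨b, by'⟩ := y
  rcases bx <;> rcases by' <;>
    simp only [idxT, cond_false, cond_true, Bool.not_false, Bool.not_true,
      omega_bas_ll, omega_bas_rr, omega_bas_lr, omega_bas_rl, Prod.mk.injEq]
  · rw [if_neg]; tauto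
  · by_cases hab : a = b
    · subst hab; simp [hu.eq_iff]
    · rw [if_neg, if_neg]
      · tauto
      · exact fun hcon => hab (hu hcon)
  · by_cases hab : a = b
    · subst hab; simp [hu.eq_iff]
    · rw [if_neg, if_neg]
      · tauto
      · exact fun hcon => hab (hu hcon)
  · rw [if_neg]; tauto

/-- Flipping the `Bool` coordinate over a finite set of fibres. -/
def flipPerm {k : ℕ} (s : Finset (Fin k)) : Equiv.Perm (Fin k × Bool) :=
  Function.Involutive.toPerm (fun x => (x.1, xor (decide (x.1 ∈ s)) x.2))
    (fun x => by simp [Bool.xor_assoc])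

lemma flipPerm_apply {k : ℕ} (s : Finset (Fin k)) (x : Fin k × Bool) :
    flipPerm s x = (x.1, xor (decide (x.1 ∈ s)) x.2) := rfl

lemma sign_flipPerm {k : ℕ} (s : Finset (Fin k)) :
    Equiv.Perm.sign (flipPerm s) = (-1) ^ s.card := by
  induction s using Finset.induction with
  | empty =>
    have : flipPerm (∅ : Finset (Fin k)) = 1 := by
      apply Equiv.ext
      intro x
      simp [flipPerm_apply]
    rw [this]
    simp
  | @insert a s ha ih =>
    have hdec : flipPerm (insert a s) =
        Equiv.Perm.prodExtendRight a (Equiv.swap false true) * flipPerm s := by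
      apply Equiv.ext
      rintro ⟨m, b⟩
      rw [Equiv.Perm.mul_apply, flipPerm_apply, flipPerm_apply]
      dsimp only
      by_cases hma : m = a
      · subst hma
        have h1 : (decide (m ∈ s)) = false := by simp [ha]
        have h2 : (decide (m ∈ insert m s)) = true := by simp
        rw [h1, h2, Bool.false_xor, Bool.true_xor, Equiv.Perm.prodExtendRight_apply_eq]
        cases b <;> simp
      · rw [Equiv.Perm.prodExtendRight_apply_ne _ hma]
        have h3 : decide (m ∈ insert a s) = decide (m ∈ s) :=
          decide_eq_decide.mpr (by simp [Finset.mem_insert, hma])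
        rw [h3]
    rw [hdec, map_mul, Equiv.Perm.sign_prodExtendRight, ih,
      Finset.card_insert_of_notMem ha, pow_succ]
    rw [Equiv.Perm.sign_swap (by simp)]
    exact mul_comm _ _

/-- The pairing condition: each pair block is mapped to a pair block. -/
def Pcond (k : ℕ) (σ : Equiv.Perm (Fin k × Bool)) : Prop :=
  ∀ m : Fin k, σ (m, true) = ((σ (m, false)).1, !(σ (m, false)).2)

instance (k : ℕ) : DecidablePred (Pcond k) := fun σ =>
  Fintype.decidableForallFintype (p := fun m => σ (m, true) = ((σ (m, false)).1, !(σ (m, false)).2))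

lemma term_eval (k : ℕ) (u : Fin k → ℕ) (hu : Function.Injective u)
    (σ : Equiv.Perm (Fin k × Bool)) :
    ((Equiv.Perm.sign σ : ℤ) : ℂ) * pprod k σ (fun x => bas (tTup k u x)) =
      if Pcond k σ then 1 else 0 := by
  have hEE : ∀ y : Fin k × Bool, tTup k u (EE k y) = idxT u y := by
    intro y
    rw [tTup, Equiv.symm_apply_apply]
  have hfac : ∀ m : Fin k,
      omegaForm (bas (tTup k u (EE k (σ (m, false))))) (bas (tTup k u (EE k (σ (m, true))))) =
        if σ (m, true) = ((σ (m, false)).1, !(σ (m, false)).2) then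
          (cond (σ (m, false)).2 (-1) 1 : ℂ) else 0 := by
    intro m
    rw [hEE, hEE, omega_idx u hu]
  by_cases hP : Pcond k σ
  · rw [if_pos hP]
    -- the permutation part
    set c : Fin k → Bool := fun m => (σ (m, false)).2 with hc
    have hinj : Function.Injective (fun m => (σ (m, false)).1) := by
      intro m m' h
      simp only at h
      by_cases hcc : c m = c m'
      · have : σ (m, false) = σ (m', false) := by
          have h1 : σ (m, false) = ((σ (m, false)).1, c m) := rfl
          have h2 : σ (m', false) = ((σ (m', false)).1, c m') := rfl
          rw [h1, h2, h, hcc]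
        exact (Prod.mk.injEq _ _ _ _).mp (σ.injective this) |>.1
      · exfalso
        have : σ (m', false) = ((σ (m, false)).1, !(c m)) := by
          have h2 : σ (m', false) = ((σ (m', false)).1, c m') := rfl
          rw [h2, ← h]
          congr 1
          rcases Bool.eq_false_or_eq_true (c m) with h3 | h3 <;>
            rcases Bool.eq_false_or_eq_true (c m') with h4 | h4 <;>
              first
                | (exfalso; rw [h3, h4] at hcc; exact hcc rfl)
                | (rw [h3, h4]; rfl)
        have h5 : σ (m', false) = σ (m, true) := by rw [this, ← hP m]
        have := σ.injective h5
        simp at this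
    have hbij := Finite.injective_iff_bijective.mp hinj
    set π : Equiv.Perm (Fin k) := Equiv.ofBijective _ hbij with hπ
    have hπ_apply : ∀ m, π m = (σ (m, false)).1 := fun m => rfl
    set s : Finset (Fin k) := Finset.univ.filter (fun m => c (π.symm m) = true) with hs
    have hdecomp : σ = flipPerm s * Equiv.prodCongrLeft (fun _ : Bool => π) := by
      apply Equiv.ext
      intro x
      obtain ⟨m, b⟩ := x
      rw [Equiv.Perm.mul_apply]
      have hblock : Equiv.prodCongrLeft (fun _ : Bool => π) (m, b) = (π m, b) := rfl
      rw [hblock, flipPerm_apply]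
      have hmem : π m ∈ s ↔ c m = true := by
        rw [hs]
        simp only [Finset.mem_filter, Finset.mem_univ, true_and, Equiv.symm_apply_apply]
      have hσm : σ (m, false) = (π m, c m) := rfl
      cases b
      · rw [hσm]
        congr 1
        rcases Bool.eq_false_or_eq_true (c m) with h3 | h3 <;>
          simp [h3, hmem, hmem.mpr]
      · rw [hP m, hσm]
        simp only
        congr 1
        rcases Bool.eq_false_or_eq_true (c m) with h3 | h3 <;>
          simp [h3, hmem, hmem.mpr]
    have hsign : Equiv.Perm.sign σ = (-1) ^ s.card := by
      rw [hdecomp, map_mul, sign_flipPerm, Equiv.Perm.sign_prodCongrLeft]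
      have : ∏ b : Bool, Equiv.Perm.sign π = Equiv.Perm.sign π * Equiv.Perm.sign π := by
        rw [Fintype.prod_bool]
      rw [this, Int.units_mul_self, mul_one]
    have hprod : pprod k σ (fun x => bas (tTup k u x)) =
        ∏ m : Fin k, (cond (c m) (-1) 1 : ℂ) := by
      rw [pprod]
      refine Finset.prod_congr rfl fun m _ => ?_
      rw [hfac m, if_pos (hP m)]
    have hprod2 : (∏ m : Fin k, (cond (c m) (-1) 1 : ℂ)) = (-1) ^ s.card := by
      have h1 : (∏ m : Fin k, (cond (c m) (-1) 1 : ℂ)) =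
          ∏ m : Fin k, (cond (c (π.symm m)) (-1) 1 : ℂ) :=
        (Equiv.prod_comp π.symm (fun m => (cond (c m) (-1) 1 : ℂ))).symm
      have h2 : ∀ m : Fin k, (cond (c (π.symm m)) (-1) 1 : ℂ) =
          if m ∈ s then (-1 : ℂ) else 1 := by
        intro m
        rw [hs]
        simp only [Finset.mem_filter, Finset.mem_univ, true_and]
        rcases Bool.eq_false_or_eq_true (c (π.symm m)) with h3 | h3 <;> simp [h3]
      rw [h1, Finset.prod_congr rfl (fun m _ => h2 m), Finset.prod_ite_mem,
        Finset.univ_inter, Finset.prod_const]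
    have hcast : ((Equiv.Perm.sign σ : ℤ) : ℂ) = (-1) ^ s.card := by
      rw [hsign]
      push_cast
      rfl
    rw [hcast, hprod, hprod2, ← mul_pow]
    norm_num
  · rw [if_neg hP]
    rw [Pcond] at hP
    push_neg at hP
    obtain ⟨m₀, hm₀⟩ := hP
    have : pprod k σ (fun x => bas (tTup k u x)) = 0 := by
      rw [pprod]
      apply Finset.prod_eq_zero (Finset.mem_univ m₀)
      rw [hfac m₀, if_neg hm₀]
    rw [this, mul_zero]

lemma Fpf_eval_ne_zero (k : ℕ) (u : Fin k → ℕ) (hu : Function.Injective u) :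
    Fpf k (fun x => bas (tTup k u x)) ≠ 0 := by
  rw [Fpf_apply, psum, Finset.sum_congr rfl (fun σ _ => term_eval k u hu σ),
    Finset.sum_boole]
  have h1 : (1 : Equiv.Perm (Fin k × Bool)) ∈ Finset.univ.filter (Pcond k) := by
    rw [Finset.mem_filter]
    exact ⟨Finset.mem_univ _, fun m => rfl⟩
  exact_mod_cast Nat.cast_ne_zero.mpr (Finset.card_ne_zero_of_mem h1)

/-! ### extending an injective tuple to a finitely supported permutation of ℕ -/

lemma exists_perm_extend {k : ℕ} (u : Fin k → ℕ) (hu : Function.Injective u) :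
    ∃ π : Equiv.Perm ℕ, {x : ℕ | π x ≠ x}.Finite ∧ ∀ m : Fin k, π (m : ℕ) = u m := by
  classical
  set N : ℕ := k + (Finset.univ.sup u) + 1 with hN
  have hkN : k ≤ N := by omega
  have huN : ∀ m : Fin k, u m < N := by
    intro m
    have := Finset.le_sup (f := u) (Finset.mem_univ m)
    omega
  have hbij : Function.Bijective (fun x : {x : Fin N // (x : ℕ) < k} =>
      (⟨⟨u ⟨(x.1 : ℕ), x.2⟩, huN _⟩, ⟨⟨(x.1 : ℕ), x.2⟩, rfl⟩⟩ :
        {x : Fin N // ∃ m : Fin k, u m = (x : ℕ)})) := by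
    constructor
    · rintro ⟨x, hx⟩ ⟨y, hy⟩ h
      simp only [Subtype.mk.injEq, Fin.mk.injEq] at h
      have h2 := congrArg Fin.val (hu h)
      exact Subtype.ext (Fin.ext h2)
    · rintro ⟨y, m, hm⟩
      refine ⟨⟨⟨(m : ℕ), lt_of_lt_of_le m.2 hkN⟩, m.2⟩, ?_⟩
      apply Subtype.ext
      apply Fin.ext
      exact hm
  refine ⟨((Equiv.ofBijective _ hbij).extendSubtype).extendDomain
    (Fin.equivSubtype (n := N)), ?_, ?_⟩
  · apply Set.Finite.subset (Set.finite_Iio N)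
    intro x hx
    simp only [Set.mem_setOf_eq] at hx
    by_contra hxN
    apply hx
    exact Equiv.Perm.extendDomain_apply_not_subtype _ Fin.equivSubtype (by simpa using hxN)
  · intro m
    have hm : ((m : ℕ) : ℕ) < N := lt_of_lt_of_le m.2 hkN
    rw [Equiv.Perm.extendDomain_apply_subtype _ Fin.equivSubtype hm]
    have h1 : (Fin.equivSubtype (n := N)).symm ⟨(m : ℕ), hm⟩ = ⟨(m : ℕ), hm⟩ := rfl
    rw [h1]
    have h2 := Equiv.extendSubtype_apply_of_mem (Equiv.ofBijective _ hbij)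
      (⟨(m : ℕ), hm⟩ : Fin N) m.2
    rw [h2]
    rfl

/-! ### the main vanishing engine -/

lemma wB_eq_zero_of_not_injective {n : ℕ} (a : Fin n → ℕ ⊕ ℕ)
    (ha : ¬Function.Injective a) : wB n a = 0 := by
  apply Subtype.ext
  have : ¬Function.Injective (fun m => bas (a m)) := by
    intro hcon
    exact ha fun m m' h => hcon (congrArg bas h)
  exact (ExteriorAlgebra.ιMulti ℂ n (M := V)).map_eq_zero_of_not_injective _ this

lemma phi_unbalanced_l {n : ℕ} {φ : ⋀[ℂ]^n V →ₗ[ℂ] ℂ} (hφ : SpInvariantFunctional n φ)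
    (a : Fin n → ℕ ⊕ ℕ) (ha : Function.Injective a) (j : ℕ)
    (hl : Sum.inl j ∈ Set.range a) (hr : Sum.inr j ∉ Set.range a) : φ (wB n a) = 0 := by
  obtain ⟨m₀, hm₀⟩ := hl
  have hprod : (∏ m, dscale j (a m)) = 2 := by
    rw [Finset.prod_eq_single m₀ ?h1 (fun h => absurd (Finset.mem_univ m₀) h), hm₀]
    · simp [dscale]
    case h1 =>
      intro b _ hb
      have h1 : a b ≠ Sum.inl j := fun h => hb (ha (h.trans hm₀.symm))
      have h2 : a b ≠ Sum.inr j := fun h => hr ⟨b, h⟩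
      rcases hab : a b with v | v
      · rw [hab] at h1
        simp only [dscale, Sum.elim_inl]
        rw [if_neg (fun h => h1 (by rw [h]))]
      · rw [hab] at h2
        simp only [dscale, Sum.elim_inr]
        rw [if_neg (fun h => h2 (by rw [h]))]
  have h := phi_scale hφ a j
  rw [hprod] at h
  linear_combination -h

lemma phi_unbalanced_r {n : ℕ} {φ : ⋀[ℂ]^n V →ₗ[ℂ] ℂ} (hφ : SpInvariantFunctional n φ)
    (a : Fin n → ℕ ⊕ ℕ) (ha : Function.Injective a) (j : ℕ)
    (hr : Sum.inr j ∈ Set.range a) (hl : Sum.inl j ∉ Set.range a) : φ (wB n a) = 0 := by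
  obtain ⟨m₀, hm₀⟩ := hr
  have hprod : (∏ m, dscale j (a m)) = 2⁻¹ := by
    rw [Finset.prod_eq_single m₀ ?h1 (fun h => absurd (Finset.mem_univ m₀) h), hm₀]
    · simp [dscale]
    case h1 =>
      intro b _ hb
      have h1 : a b ≠ Sum.inr j := fun h => hb (ha (h.trans hm₀.symm))
      have h2 : a b ≠ Sum.inl j := fun h => hl ⟨b, h⟩
      rcases hab : a b with v | v
      · rw [hab] at h2
        simp only [dscale, Sum.elim_inl]
        rw [if_neg (fun h => h2 (by rw [h]))]
      · rw [hab] at h1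
        simp only [dscale, Sum.elim_inr]
        rw [if_neg (fun h => h1 (by rw [h]))]
  have h := phi_scale hφ a j
  rw [hprod] at h
  have h2 : (2 : ℂ) * φ (wB n a) = 2 * (2⁻¹ * φ (wB n a)) := by
    conv_lhs => rw [h]
  rw [← mul_assoc] at h2
  norm_num at h2
  linear_combination h2

lemma wB_perm {n : ℕ} (a b : Fin n → ℕ ⊕ ℕ) (τ : Equiv.Perm (Fin n)) (hab : a = b ∘ τ) :
    wB n a = ((Equiv.Perm.sign τ : ℤ) : ℂ) • wB n b := by
  apply Subtype.ext
  push_cast [wB, wV]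
  have h1 : (fun m => bas (a m)) = (fun m => bas (b m)) ∘ τ := by
    funext m
    rw [hab]
    rfl
  rw [h1]
  have hmp := (ExteriorAlgebra.ιMulti ℂ n (M := V)).map_perm (fun m => bas (b m)) τ
  rw [hmp]
  rcases Int.units_eq_one_or (Equiv.Perm.sign τ) with h | h <;> rw [h] <;> simp

lemma comp_perm_of_range_eq {α : Type*} {n : ℕ} {u w : Fin n → α}
    (hu : Function.Injective u) (hw : Function.Injective w)
    (h : Set.range u = Set.range w) : ∃ τ : Equiv.Perm (Fin n), u = w ∘ τ := by
  refine ⟨(Equiv.ofInjective u hu).trans ((Equiv.setCongr h).trans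
    (Equiv.ofInjective w hw).symm), ?_⟩
  funext x
  simp only [Function.comp_apply, Equiv.trans_apply]
  rw [Equiv.apply_ofInjective_symm hw]
  rfl

/-! ### classification of injective basis tuples -/

lemma tTup_injective {k : ℕ} (u : Fin k → ℕ) (hu : Function.Injective u) :
    Function.Injective (tTup k u) := by
  have hidx : Function.Injective (idxT u) := by
    rintro ⟨m, b⟩ ⟨m', b'⟩ h
    cases b <;> cases b' <;> simp only [idxT, cond_false, cond_true] at h
    · rw [Sum.inl.injEq] at h
      rw [hu h]
    · exact absurd h (by simp)
    · exact absurd h (by simp)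
    · rw [Sum.inr.injEq] at h
      rw [hu h]
  exact hidx.comp (EE k).symm.injective

lemma range_tTup {k : ℕ} (u : Fin k → ℕ) :
    Set.range (tTup k u) = Sum.inl '' (Set.range u) ∪ Sum.inr '' (Set.range u) := by
  have h1 : Set.range (tTup k u) = Set.range (idxT u) :=
    (EE k).symm.surjective.range_comp (idxT u)
  rw [h1]
  ext x
  constructor
  · rintro ⟨⟨m, b⟩, rfl⟩
    cases b
    · exact Or.inl ⟨u m, ⟨m, rfl⟩, rfl⟩
    · exact Or.inr ⟨u m, ⟨m, rfl⟩, rfl⟩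
  · rintro (⟨_, ⟨m, rfl⟩, rfl⟩ | ⟨_, ⟨m, rfl⟩, rfl⟩)
    · exact ⟨(m, false), rfl⟩
    · exact ⟨(m, true), rfl⟩

/-- Any injective tuple of basis indices is either "balanced" (the range matches the
range of a standard symplectic tuple) or "unbalanced" (some symplectic pair occurs
only halfway). -/
lemma classify {n : ℕ} (a : Fin n → ℕ ⊕ ℕ) (ha : Function.Injective a) :
    (∃ (k : ℕ) (_ : n = k + k) (u : Fin k → ℕ), Function.Injective u ∧
        Set.range a = Set.range (tTup k u)) ∨
      (∃ j : ℕ, (Sum.inl j ∈ Set.range a ∧ Sum.inr j ∉ Set.range a) ∨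
        (Sum.inr j ∈ Set.range a ∧ Sum.inl j ∉ Set.range a)) := by
  classical
  set S : Finset (ℕ ⊕ ℕ) := Finset.univ.image a with hS
  set Jl : Finset ℕ := S.preimage Sum.inl Sum.inl_injective.injOn with hJl
  set Jr : Finset ℕ := S.preimage Sum.inr Sum.inr_injective.injOn with hJr
  have hmemJl : ∀ j : ℕ, j ∈ Jl ↔ Sum.inl j ∈ Set.range a := by
    intro j
    rw [hJl, Finset.mem_preimage, hS, Finset.mem_image]
    constructor
    · rintro ⟨m, _, hm⟩; exact ⟨m, hm⟩
    · rintro ⟨m, hm⟩; exact ⟨m, Finset.mem_univ m, hm⟩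
  have hmemJr : ∀ j : ℕ, j ∈ Jr ↔ Sum.inr j ∈ Set.range a := by
    intro j
    rw [hJr, Finset.mem_preimage, hS, Finset.mem_image]
    constructor
    · rintro ⟨m, _, hm⟩; exact ⟨m, hm⟩
    · rintro ⟨m, hm⟩; exact ⟨m, Finset.mem_univ m, hm⟩
  by_cases hJ : Jl = Jr
  · left
    have hS_decomp : S = Jl.image Sum.inl ∪ Jr.image Sum.inr := by
      ext x
      rcases x with v | v
      · simp only [Finset.mem_union, Finset.mem_image]
        constructor
        · intro hv
          exact Or.inl ⟨v, Finset.mem_preimage.mpr hv, rfl⟩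
        · rintro (⟨w, hw, hweq⟩ | ⟨w, hw, hweq⟩)
          · rw [Sum.inl.injEq] at hweq
            subst hweq
            exact Finset.mem_preimage.mp hw
          · exact absurd hweq (by simp)
      · simp only [Finset.mem_union, Finset.mem_image]
        constructor
        · intro hv
          exact Or.inr ⟨v, Finset.mem_preimage.mpr hv, rfl⟩
        · rintro (⟨w, hw, hweq⟩ | ⟨w, hw, hweq⟩)
          · exact absurd hweq (by simp)
          · rw [Sum.inr.injEq] at hweq
            subst hweq
            exact Finset.mem_preimage.mp hw
    have hcard : n = Jl.card + Jl.card := by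
      have h1 : S.card = n := by
        rw [hS, Finset.card_image_of_injective _ ha, Finset.card_univ, Fintype.card_fin]
      have h2 : S.card = Jl.card + Jr.card := by
        rw [hS_decomp, Finset.card_union_of_disjoint, Finset.card_image_of_injective _
          Sum.inl_injective, Finset.card_image_of_injective _ Sum.inr_injective]
        rw [Finset.disjoint_left]
        rintro x hx hx'
        rw [Finset.mem_image] at hx hx'
        obtain ⟨v, _, rfl⟩ := hx
        obtain ⟨w, _, hw⟩ := hx'
        exact absurd hw (by simp)
      rw [← h1, h2, hJ]
    refine ⟨Jl.card, hcard, fun m => Jl.orderEmbOfFin rfl m, ?_, ?_⟩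
    · exact (Jl.orderEmbOfFin rfl).injective
    · rw [range_tTup]
      have hrange_u : Set.range (fun m => Jl.orderEmbOfFin rfl m) = ↑Jl :=
        Finset.range_orderEmbOfFin Jl rfl
      rw [hrange_u]
      have hrange_a : Set.range a = ↑S := by
        rw [hS, Finset.coe_image, Finset.coe_univ, Set.image_univ]
      rw [hrange_a, hS_decomp, Finset.coe_union, Finset.coe_image, Finset.coe_image, hJ]
  · right
    have : ∃ j, ¬(j ∈ Jl ↔ j ∈ Jr) := by
      by_contra hcon
      push_neg at hcon
      exact hJ (Finset.ext fun j => (hcon j))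
    obtain ⟨j, hj⟩ := this
    refine ⟨j, ?_⟩
    by_cases hjl : j ∈ Jl
    · have hjr : j ∉ Jr := fun h => hj ⟨fun _ => h, fun _ => hjl⟩
      exact Or.inl ⟨(hmemJl j).mp hjl, fun h => hjr ((hmemJr j).mpr h)⟩
    · have hjr : j ∈ Jr := by
        by_contra hjr
        exact hj ⟨fun h => absurd h hjl, fun h => absurd h hjr⟩
      exact Or.inr ⟨(hmemJr j).mp hjr, fun h => hjl ((hmemJl j).mpr h)⟩

/-! ### the vanishing engines -/

/-- For an invariant functional, the value on any standard symplectic wedge equals the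
value on the canonical one. -/
lemma phi_tTup {k : ℕ} {φ : ⋀[ℂ]^(k + k) V →ₗ[ℂ] ℂ} (hφ : SpInvariantFunctional (k + k) φ)
    (u : Fin k → ℕ) (hu : Function.Injective u) :
    φ (wB (k + k) (tTup k u)) = φ (wB (k + k) (tTup k (fun m => (m : ℕ)))) := by
  obtain ⟨π, hπfin, hπval⟩ := exists_perm_extend u hu
  have hgt : (fun x => gperm π (bas (tTup k (fun m => (m : ℕ)) x))) =
      fun x => bas (tTup k u x) := by
    funext x
    rw [gperm_bas]
    congr 1
    rw [tTup, tTup]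
    obtain ⟨m, b⟩ := (EE k).symm x
    cases b
    · simp only [idxT, cond_false, Equiv.sumCongr_apply, Sum.map_inl]
      rw [hπval m]
    · simp only [idxT, cond_true, Equiv.sumCongr_apply, Sum.map_inr]
      rw [hπval m]
  have h := phi_inv_apply hφ (isSp_gperm π hπfin) (fun x => bas (tTup k (fun m => (m : ℕ)) x))
  rw [hgt] at h
  exact h

lemma engine_even (k : ℕ) (φ : ⋀[ℂ]^(k + k) V →ₗ[ℂ] ℂ)
    (hφ : SpInvariantFunctional (k + k) φ)
    (hcan : φ (wB (k + k) (tTup k (fun m => (m : ℕ)))) = 0) : φ = 0 := by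
  apply ext_zero_of_basis
  intro a
  by_cases ha : Function.Injective a
  · rcases classify a ha with ⟨kk, hkk, u, hu, hrange⟩ | ⟨j, ⟨h1, h2⟩ | ⟨h1, h2⟩⟩
    · have hkeq : kk = k := by omega
      subst hkeq
      obtain ⟨τ, hτ⟩ := comp_perm_of_range_eq ha (tTup_injective u hu) hrange
      rw [wB_perm a (tTup kk u) τ hτ, map_smul, phi_tTup hφ u hu, hcan, smul_zero]
    · exact phi_unbalanced_l hφ a ha j h1 h2
    · exact phi_unbalanced_r hφ a ha j h1 h2
  · rw [wB_eq_zero_of_not_injective a ha, map_zero]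

lemma engine_odd (n : ℕ) (hodd : Odd n) (φ : ⋀[ℂ]^n V →ₗ[ℂ] ℂ)
    (hφ : SpInvariantFunctional n φ) : φ = 0 := by
  apply ext_zero_of_basis
  intro a
  by_cases ha : Function.Injective a
  · rcases classify a ha with ⟨kk, hkk, u, hu, hrange⟩ | ⟨j, ⟨h1, h2⟩ | ⟨h1, h2⟩⟩
    · exfalso
      rw [hkk] at hodd
      exact (Nat.not_odd_iff_even.mpr ⟨kk, rfl⟩) hodd
    · exact phi_unbalanced_l hφ a ha j h1 h2
    · exact phi_unbalanced_r hφ a ha j h1 h2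
  · rw [wB_eq_zero_of_not_injective a ha, map_zero]

/-! ### the invariant functional `φ₀` and the main theorem -/

/-- The family of alternating maps supported in degree `k + k`. -/
def fam (k : ℕ) : ∀ j : ℕ, V [⋀^Fin j]→ₗ[ℂ] ℂ :=
  Function.update (fun j => (0 : V [⋀^Fin j]→ₗ[ℂ] ℂ)) (k + k) (Fpf k)

lemma fam_self (k : ℕ) : fam k (k + k) = Fpf k := Function.update_self _ _ _

lemma fam_ne (k j : ℕ) (hj : j ≠ k + k) : fam k j = 0 := Function.update_of_ne hj _ _

/-- The canonical invariant functional on `⋀^(k+k) V`. -/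
def phiZero (k : ℕ) : ⋀[ℂ]^(k + k) V →ₗ[ℂ] ℂ :=
  (ExteriorAlgebra.liftAlternating (fam k)) ∘ₗ (Submodule.subtype _)

lemma phiZero_wV (k : ℕ) (v : Fin (k + k) → V) : phiZero k (wV (k + k) v) = Fpf k v := by
  rw [phiZero, LinearMap.comp_apply, Submodule.subtype_apply, wV_coe,
    ExteriorAlgebra.liftAlternating_apply_ιMulti, fam_self]

lemma phiZero_inv (k : ℕ) : SpInvariantFunctional (k + k) (phiZero k) := by
  intro g hg x y hxy
  have hcomp : (ExteriorAlgebra.liftAlternating (fam k)) ∘ₗ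
      (ExteriorAlgebra.map (g : V →ₗ[ℂ] V)).toLinearMap =
      ExteriorAlgebra.liftAlternating (fam k) := by
    apply ExteriorAlgebra.lhom_ext
    intro m
    ext v
    simp only [LinearMap.compAlternatingMap_apply, LinearMap.comp_apply,
      AlgHom.toLinearMap_apply]
    rw [ExteriorAlgebra.map_apply_ιMulti, ExteriorAlgebra.liftAlternating_apply_ιMulti,
      ExteriorAlgebra.liftAlternating_apply_ιMulti]
    by_cases hm : m = k + k
    · subst hm
      rw [fam_self]
      exact Fpf_comp k (g : V →ₗ[ℂ] V) hg.1 v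
    · rw [fam_ne k m hm]
      rfl
  have h1 : phiZero k y =
      ExteriorAlgebra.liftAlternating (fam k) (y : ExteriorAlgebra ℂ V) := rfl
  rw [h1, ← hxy]
  have h2 := congrArg (fun F : ExteriorAlgebra ℂ V →ₗ[ℂ] ℂ =>
    F (x : ExteriorAlgebra ℂ V)) hcomp
  simp only [LinearMap.comp_apply, AlgHom.toLinearMap_apply] at h2
  exact h2

/-- The space of `Sp`-invariant linear functionals on `⋀^i V` is zero when `i`
is odd and one-dimensional when `i` is even. -/
theorem invariant_functionals_on_exterior_power (i : ℕ) :
    (Odd i → ∀ φ : ⋀[ℂ]^i V →ₗ[ℂ] ℂ, SpInvariantFunctional i φ → φ = 0) ∧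
    (Even i → ∃ φ₀ : ⋀[ℂ]^i V →ₗ[ℂ] ℂ, SpInvariantFunctional i φ₀ ∧ φ₀ ≠ 0 ∧
      ∀ φ : ⋀[ℂ]^i V →ₗ[ℂ] ℂ, SpInvariantFunctional i φ → ∃ c : ℂ, φ = c • φ₀) := by
  constructor
  · intro hodd φ hφ
    exact engine_odd i hodd φ hφ
  · rintro ⟨k, hk⟩
    subst hk
    have hval_inj : Function.Injective (fun m : Fin k => (m : ℕ)) := fun m m' h => Fin.ext h
    set A : ℂ := Fpf k (fun x => bas (tTup k (fun m => (m : ℕ)) x)) with hA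
    have hA0 : A ≠ 0 := Fpf_eval_ne_zero k _ hval_inj
    have hwcan : phiZero k (wB (k + k) (tTup k (fun m => (m : ℕ)))) = A :=
      phiZero_wV k _
    refine ⟨phiZero k, phiZero_inv k, ?_, ?_⟩
    · intro hcon
      apply hA0
      rw [← hwcan, hcon, LinearMap.zero_apply]
    · intro φ hφ
      set c : ℂ := φ (wB (k + k) (tTup k (fun m => (m : ℕ)))) / A with hc
      refine ⟨c, ?_⟩
      have hψ : SpInvariantFunctional (k + k) (φ - c • phiZero k) := by
        intro g hg x y hxy
        simp only [LinearMap.sub_apply, LinearMap.smul_apply, smul_eq_mul]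
        rw [hφ g hg x y hxy, phiZero_inv k g hg x y hxy]
      have hzero : (φ - c • phiZero k) (wB (k + k) (tTup k (fun m => (m : ℕ)))) = 0 := by
        simp only [LinearMap.sub_apply, LinearMap.smul_apply, smul_eq_mul]
        rw [hwcan, hc, div_mul_cancel₀ _ hA0, sub_self]
      have hfin := engine_even k _ hψ hzero
      exact sub_eq_zero.mp hfin

end
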